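/- Let S : ℝ → ℝ be measurable, nonnegative and Lebesgue-integrable, let θ > 0, F_θ := {f ∈ ℝ : S(f) > θ}, and let f_s ≥ μ(F_θ). If F ⊆ ℝ is measurable with μ(F) ≤ f_s and F maximizes energy under the budget f_s, i.e. ∫_F S(f) df ≥ ∫_G S(f) df for every measurable G ⊆ ℝ with μ(G) ≤ f_s, then μ(F_θ \ F) = 0; i.e., any energy-maximizing set with measure budget at least μ(F_θ) contains F_θ up to a Lebesgue-null set. -/

import Mathlib

open MeasureTheory

open Set Filter Topology

/-- Sierpiński-type lemma for Lebesgue measure on ℝ: any measurable set of finite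
measure contains a measurable subset of any prescribed smaller measure. -/
lemma exists_subset_volume_eq {s : Set ℝ} (hs : MeasurableSet s) (hfin : volume s ≠ ⊤)
    {r : ENNReal} (hr : r ≤ volume s) :
    ∃ t, t ⊆ s ∧ MeasurableSet t ∧ volume t = r := by
  rcases eq_or_lt_of_le hr with hr' | hr'
  · exact ⟨s, subset_rfl, hs, hr'.symm⟩
  rcases eq_or_ne r 0 with rfl | hr0
  · exact ⟨∅, empty_subset _, MeasurableSet.empty, measure_empty⟩
  have hrfin : r ≠ ⊤ := ne_top_of_le_ne_top hfin hr
  set g : ℝ → ℝ := fun t => (volume (s ∩ Iic t)).toReal with hg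
  have hfin' : ∀ t : ℝ, volume (s ∩ Iic t) ≠ ⊤ :=
    fun t => ne_top_of_le_ne_top hfin (measure_mono inter_subset_left)
  have hmono : Monotone g := by
    intro x y hxy
    exact ENNReal.toReal_mono (hfin' y)
      (measure_mono (inter_subset_inter_right _ (Iic_subset_Iic.2 hxy)))
  have hlip : LipschitzWith 1 g := by
    refine LipschitzWith.of_dist_le_mul fun x y => ?_
    wlog hxy : y ≤ x generalizing x y
    · rw [dist_comm, dist_comm x y]; exact this y x (le_of_not_ge hxy)
    rw [Real.dist_eq, Real.dist_eq, abs_of_nonneg (sub_nonneg.2 (hmono hxy)),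
      abs_of_nonneg (sub_nonneg.2 hxy), NNReal.coe_one, one_mul]
    have hsub : s ∩ Iic x ⊆ (s ∩ Iic y) ∪ Ioc y x := by
      intro z hz
      rcases le_or_gt z y with h | h
      · exact Or.inl ⟨hz.1, h⟩
      · exact Or.inr ⟨h, hz.2⟩
    have : volume (s ∩ Iic x) ≤ volume (s ∩ Iic y) + ENNReal.ofReal (x - y) := by
      calc volume (s ∩ Iic x) ≤ volume ((s ∩ Iic y) ∪ Ioc y x) := measure_mono hsub
        _ ≤ volume (s ∩ Iic y) + volume (Ioc y x) := measure_union_le _ _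
        _ = volume (s ∩ Iic y) + ENNReal.ofReal (x - y) := by rw [Real.volume_Ioc]
    have h2 := ENNReal.toReal_mono (by
      refine ENNReal.add_ne_top.2 ⟨hfin' y, ENNReal.ofReal_ne_top⟩) this
    rw [ENNReal.toReal_add (hfin' y) ENNReal.ofReal_ne_top,
      ENNReal.toReal_ofReal (sub_nonneg.2 hxy)] at h2
    linarith [h2]
  -- limit at +∞
  have hUnion : (⋃ t : ℝ, s ∩ Iic t) = s := by
    ext x; simp only [mem_iUnion, mem_inter_iff, mem_Iic]
    exact ⟨fun ⟨t, h, _⟩ => h, fun h => ⟨x, h, le_rfl⟩⟩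
  have htop : Tendsto (fun t : ℝ => volume (s ∩ Iic t)) atTop (𝓝 (volume s)) := by
    have := tendsto_measure_iUnion_atTop (μ := volume)
      (s := fun t : ℝ => s ∩ Iic t)
      (fun x y hxy => inter_subset_inter_right _ (Iic_subset_Iic.2 hxy))
    simp only [Function.comp] at this
    rwa [hUnion] at this
  obtain ⟨t₁, ht₁⟩ : ∃ t₁ : ℝ, r < volume (s ∩ Iic t₁) :=
    ((htop.eventually (eventually_gt_nhds hr')).exists)
  -- limit at -∞ (along ℕ)
  have hInter : (⋂ n : ℕ, s ∩ Iic (-(n : ℝ))) = ∅ := by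
    ext x
    simp only [mem_iInter, mem_inter_iff, mem_Iic, mem_empty_iff_false, iff_false, not_forall]
    obtain ⟨n, hn⟩ := exists_nat_gt (-x)
    exact ⟨n, fun h => absurd h.2 (by linarith)⟩
  have hbot : Tendsto (fun n : ℕ => volume (s ∩ Iic (-(n : ℝ)))) atTop (𝓝 0) := by
    have := tendsto_measure_iInter_atTop (μ := volume)
      (s := fun n : ℕ => s ∩ Iic (-(n : ℝ)))
      (fun n => (hs.inter measurableSet_Iic).nullMeasurableSet)
      (fun m n hmn => inter_subset_inter_right _ (Iic_subset_Iic.2 (by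
        simp only [neg_le_neg_iff]; exact_mod_cast hmn)))
      ⟨0, hfin' _⟩
    rwa [hInter, measure_empty] at this
  obtain ⟨n₀, hn₀⟩ : ∃ n₀ : ℕ, volume (s ∩ Iic (-(n₀ : ℝ))) < r :=
    (hbot.eventually (eventually_lt_nhds (pos_iff_ne_zero.2 hr0))).exists
  -- intermediate value
  have hle : (-(n₀ : ℝ)) ≤ t₁ := by
    by_contra h
    exact absurd (measure_mono (inter_subset_inter_right (s := Iic t₁)
      (t := Iic (-(n₀:ℝ))) _ (Iic_subset_Iic.2 (le_of_not_ge h)))) (not_le.2 (hn₀.trans ht₁))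
  have hIcc : r.toReal ∈ Icc (g (-(n₀ : ℝ))) (g t₁) := by
    constructor
    · exact le_of_lt (ENNReal.toReal_strict_mono hrfin hn₀)
    · exact le_of_lt (ENNReal.toReal_strict_mono (hfin' t₁) ht₁)
  obtain ⟨t, _, htval⟩ := intermediate_value_Icc hle hlip.continuous.continuousOn hIcc
  refine ⟨s ∩ Iic t, inter_subset_left, hs.inter measurableSet_Iic, ?_⟩
  have := congrArg ENNReal.ofReal htval
  rwa [hg, ENNReal.ofReal_toReal (hfin' t), ENNReal.ofReal_toReal hrfin] at this

lemma integral_lower_bound_aux (S : ℝ → ℝ) (hSmeas : Measurable S) (hSint : Integrable S)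
    (θ : ℝ) (hθ : 0 < θ) {A : Set ℝ} (hAsub : A ⊆ {x : ℝ | θ < S x})
    (hA0 : volume A ≠ 0) :
    θ * (volume A).toReal < ∫ f in A, S f := by
  have hT : MeasurableSet {x : ℝ | θ < S x} := measurableSet_lt measurable_const hSmeas
  have hTA : {x : ℝ | θ < S x} ∩ A = A := inter_eq_self_of_subset_right hAsub
  have key := setIntegral_gt_gt (μ := volume.restrict A) (R := θ) (f := S) hθ.le
    ((hSint.restrict (s := A)).restrict) ?_
  · rw [Measure.restrict_restrict hT, hTA, measureReal_def, Measure.restrict_apply hT, hTA] at key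
    linarith [key]
  · rw [Measure.restrict_apply hT, hTA]
    exact hA0

/-- Any energy-maximizing set with measure budget `f_s ≥ μ F_θ` contains
`F_θ = {S > θ}` up to a Lebesgue-null set. -/
theorem energy_maximizer_contains_waterfilling_set
    (S : ℝ → ℝ) (hSmeas : Measurable S) (hSnonneg : ∀ f, 0 ≤ S f)
    (hSint : Integrable S) (θ : ℝ) (hθ : 0 < θ)
    (fs : ℝ) (hfs : volume {f : ℝ | θ < S f} ≤ ENNReal.ofReal fs)
    (F : Set ℝ) (hFmeas : MeasurableSet F)
    (hFle : volume F ≤ ENNReal.ofReal fs)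
    (hmax : ∀ G : Set ℝ, MeasurableSet G → volume G ≤ ENNReal.ofReal fs →
      ∫ f in G, S f ≤ ∫ f in F, S f) :
    volume ({f : ℝ | θ < S f} \ F) = 0 := by
  classical
  set T : Set ℝ := {f : ℝ | θ < S f} with hTdef
  have hTmeas : MeasurableSet T := measurableSet_lt measurable_const hSmeas
  set A : Set ℝ := T \ F with hAdef
  have hAmeas : MeasurableSet A := hTmeas.diff hFmeas
  by_contra hA0
  have hAsubT : A ⊆ T := diff_subset
  have hFfin : volume F ≠ ⊤ := (lt_of_le_of_lt hFle ENNReal.ofReal_lt_top).ne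
  have hTfin : volume T ≠ ⊤ := (lt_of_le_of_lt hfs ENNReal.ofReal_lt_top).ne
  have hAfin : volume A ≠ ⊤ := ne_top_of_le_ne_top hTfin (measure_mono hAsubT)
  have hlow : θ * (volume A).toReal < ∫ f in A, S f :=
    integral_lower_bound_aux S hSmeas hSint θ hθ hAsubT hA0
  have hdisjFA : Disjoint F A := disjoint_sdiff_right
  have hupper : ∀ B : Set ℝ, MeasurableSet B → B ⊆ F \ T →
      ∫ f in B, S f ≤ θ * (volume B).toReal := by
    intro B hBmeas hBsub
    have hBfin : volume B < ⊤ :=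
      lt_of_le_of_lt (measure_mono (hBsub.trans diff_subset)) hFfin.lt_top
    calc ∫ f in B, S f ≤ ∫ _ in B, θ := by
          refine setIntegral_mono_on hSint.integrableOn
            (integrableOn_const hBfin.ne) hBmeas fun x hx => ?_
          exact le_of_not_gt (hBsub hx).2
      _ = θ * (volume B).toReal := by
          rw [setIntegral_const, smul_eq_mul, mul_comm, measureReal_def]
  by_cases hab : volume A ≤ volume (F \ T)
  · obtain ⟨B, hBsub, hBmeas, hBvol⟩ :=
      exists_subset_volume_eq (hFmeas.diff hTmeas)
        (ne_top_of_le_ne_top hFfin (measure_mono diff_subset)) hab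
    have hBF : B ⊆ F := hBsub.trans diff_subset
    have hBfin : volume B ≠ ⊤ := by rw [hBvol]; exact hAfin
    have hdisj1 : Disjoint (F \ B) A := hdisjFA.mono_left diff_subset
    have hG : volume ((F \ B) ∪ A) = volume F := by
      rw [measure_union hdisj1 hAmeas,
        measure_diff hBF hBmeas.nullMeasurableSet hBfin, hBvol,
        tsub_add_cancel_of_le (hBvol ▸ measure_mono hBF)]
    have hmaxG := hmax ((F \ B) ∪ A) ((hFmeas.diff hBmeas).union hAmeas)
      (hG ▸ hFle)
    rw [setIntegral_union hdisj1 hAmeas hSint.integrableOn hSint.integrableOn] at hmaxG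
    have hFsplit : ∫ f in F, S f = (∫ f in F \ B, S f) + ∫ f in B, S f := by
      rw [← setIntegral_union disjoint_sdiff_left hBmeas hSint.integrableOn
        hSint.integrableOn, diff_union_of_subset hBF]
    have hB_up := hupper B hBmeas hBsub
    rw [hBvol] at hB_up
    rw [hFsplit] at hmaxG
    linarith
  · push_neg at hab
    have hdisj2 : Disjoint (F ∩ T) A := hdisjFA.mono_left inter_subset_left
    have hGsub : (F ∩ T) ∪ A ⊆ T := union_subset inter_subset_right hAsubT
    have hmaxG := hmax ((F ∩ T) ∪ A) ((hFmeas.inter hTmeas).union hAmeas)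
      (le_trans (measure_mono hGsub) hfs)
    rw [setIntegral_union hdisj2 hAmeas hSint.integrableOn hSint.integrableOn] at hmaxG
    have hFsplit : ∫ f in F, S f = (∫ f in F ∩ T, S f) + ∫ f in F \ T, S f := by
      rw [← setIntegral_union (Disjoint.mono_left inter_subset_right disjoint_sdiff_right)
        (hFmeas.diff hTmeas) hSint.integrableOn hSint.integrableOn, inter_union_diff]
    have hFT_up := hupper (F \ T) (hFmeas.diff hTmeas) subset_rfl
    have hmono : θ * (volume (F \ T)).toReal ≤ θ * (volume A).toReal := by
      have := ENNReal.toReal_mono hAfin hab.le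
      nlinarith
    rw [hFsplit] at hmaxG
    linarith
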